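/- Let F_1, ..., F_{i-1} : [0,1] → [0,1] be non-decreasing with F_j(z) representing CDFs, let σ ∈ [0,1] with Q = ∏_{j<i} F_j(σ) > 0, and let g : [0,1] → ℝ be 1-Lipschitz and non-decreasing. Suppose x_1, ..., x_{i-1} are independent with x_j ∼ F_j, conditioned on the event E = {max_{j<i} x_j < σ}. Define h(z) = E[max{z, x_1, ..., x_{i-1}} | E]. Then for all 0 ≤ v ≤ u < σ: h(u) - h(v) ≤ (u - v) * (∏_{j<i} F_j(u)) / Q. -/

import Mathlib

open MeasureTheory

lemma measurable_fold_max {n : ℕ} (z : ℝ) (s : Finset (Fin n)) :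
    Measurable fun x : Fin n → ℝ => Finset.fold max z x s := by
  induction s using Finset.cons_induction with
  | empty => simpa using measurable_const
  | cons a s ha ih =>
      simpa [Finset.fold_cons] using (measurable_pi_apply a).max ih

lemma fold_max_diff_le {n : ℕ} (x : Fin n → ℝ) {u v : ℝ} (hvu : v ≤ u) :
    Finset.fold max u x Finset.univ - Finset.fold max v x Finset.univ ≤
      Set.indicator {y : Fin n → ℝ | ∀ j, y j < u} (fun _ => u - v) x := by
  set A := Finset.fold max u x Finset.univ with hA
  set B := Finset.fold max v x Finset.univ with hB
  have hvB : v ≤ B := (Finset.le_fold_max _).2 (Or.inl le_rfl)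
  by_cases hx : ∀ j, x j < u
  · rw [Set.indicator_of_mem (show x ∈ {y : Fin n → ℝ | ∀ j, y j < u} from hx)]
    have hAle : A ≤ B + (u - v) := by
      refine (Finset.fold_max_le _).2 ⟨by linarith, fun j _ => ?_⟩
      have := (hx j).le
      linarith
    linarith
  · rw [Set.indicator_of_notMem (show x ∉ {y : Fin n → ℝ | ∀ j, y j < u} from hx)]
    push_neg at hx
    obtain ⟨j, hj⟩ := hx
    have huB : u ≤ B := (Finset.le_fold_max _).2 (Or.inr ⟨j, Finset.mem_univ j, hj⟩)
    have hAB : A ≤ B :=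
      (Finset.fold_max_le _).2 ⟨huB, fun k _ =>
        (Finset.le_fold_max _).2 (Or.inr ⟨k, Finset.mem_univ k, le_rfl⟩)⟩
    linarith

theorem sharp_derivative_bound (n : ℕ) (μ : Fin n → Measure ℝ)
    [∀ j, IsProbabilityMeasure (μ j)]
    (F : Fin n → ℝ → ℝ) (hF : ∀ j x, F j x = (μ j (Set.Iio x)).toReal)
    (σ : ℝ) (hσ : σ ∈ Set.Icc (0:ℝ) 1)
    (Q : ℝ) (hQdef : Q = ∏ j, F j σ) (hQ : 0 < Q)
    (g : ℝ → ℝ) (hg : LipschitzWith 1 g) (hgmono : Monotone g)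
    (h : ℝ → ℝ)
    (hh : ∀ z, h z =
      (∫ x in {x : Fin n → ℝ | ∀ j, x j < σ},
          Finset.fold max z x Finset.univ ∂(Measure.pi μ)) / Q)
    (u v : ℝ) (hv : 0 ≤ v) (hvu : v ≤ u) (huσ : u < σ) :
    h u - h v ≤ (u - v) * (∏ j, F j u) / Q := by
  classical
  set π := Measure.pi μ with hπ
  set E : Set (Fin n → ℝ) := {x | ∀ j, x j < σ} with hE
  set S : Set (Fin n → ℝ) := {x | ∀ j, x j < u} with hS
  have hEeq : E = Set.pi Set.univ (fun _ => Set.Iio σ) := by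
    ext x; simp [hE, Set.mem_pi]
  have hSeq : S = Set.pi Set.univ (fun _ => Set.Iio u) := by
    ext x; simp [hS, Set.mem_pi]
  have hEmeas : MeasurableSet E := by
    rw [hEeq]; exact MeasurableSet.univ_pi fun _ => measurableSet_Iio
  have hSmeas : MeasurableSet S := by
    rw [hSeq]; exact MeasurableSet.univ_pi fun _ => measurableSet_Iio
  have hSsubE : S ⊆ E := fun x hx j => lt_trans (hx j) huσ
  -- integrability of the fold functions on E
  have hint : ∀ z, z ≤ σ → IntegrableOn
      (fun x : Fin n → ℝ => Finset.fold max z x Finset.univ) E π := by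
    intro z hz
    refine Integrable.mono' (integrable_const (|z| + |σ|))
      (measurable_fold_max z Finset.univ).aestronglyMeasurable ?_
    refine (ae_restrict_iff' hEmeas).2 (Filter.Eventually.of_forall fun x hx => ?_)
    have h1 : z ≤ Finset.fold max z x Finset.univ :=
      (Finset.le_fold_max _).2 (Or.inl le_rfl)
    have h2 : Finset.fold max z x Finset.univ ≤ σ :=
      (Finset.fold_max_le _).2 ⟨hz, fun j _ => (hx j).le⟩
    rw [Real.norm_eq_abs, abs_le]
    constructor <;> [skip; skip] <;>
      · have := abs_nonneg z; have := abs_nonneg σ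
        have := neg_abs_le z; have := le_abs_self σ
        linarith
  have hintu := hint u huσ.le
  have hintv := hint v (hvu.trans huσ.le)
  -- indicator function integrable
  have hindint : IntegrableOn
      (fun x => Set.indicator S (fun _ => u - v) x) E π := by
    refine Integrable.indicator ?_ hSmeas
    exact integrable_const _
  have key : (∫ x in E, Finset.fold max u x Finset.univ ∂π) -
      (∫ x in E, Finset.fold max v x Finset.univ ∂π) ≤
      (u - v) * ∏ j, F j u := by
    rw [← integral_sub hintu hintv]
    have step1 : (∫ x in E, (Finset.fold max u x Finset.univ -
        Finset.fold max v x Finset.univ) ∂π) ≤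
        ∫ x in E, Set.indicator S (fun _ => u - v) x ∂π := by
      refine setIntegral_mono_on (hintu.sub hintv) hindint hEmeas
        fun x _ => fold_max_diff_le x hvu
    refine step1.trans ?_
    rw [setIntegral_indicator hSmeas, Set.inter_eq_right.2 hSsubE,
      setIntegral_const, smul_eq_mul, mul_comm]
    have hmeasS : (π S).toReal = ∏ j, F j u := by
      rw [hSeq, hπ, Measure.pi_pi, ENNReal.toReal_prod]
      exact Finset.prod_congr rfl fun j _ => (hF j u).symm
    rw [measureReal_def, hmeasS]
  rw [hh u, hh v, div_sub_div_same]
  gcongr
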